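/- Let U be a 2×2 complex unitary matrix. The controlled-U gate is control-symmetric, i.e. E₀ ⊗ₖ I₂ + E₁ ⊗ₖ U = I₂ ⊗ₖ E₀ + U ⊗ₖ E₁ (as 4×4 complex matrices), if and only if there exists a real number φ such that U is the diagonal matrix diag(1, exp(iφ)) (a phase gate). -/

import Mathlib

open Matrix Kronecker

/-- A controlled-`U` gate (for `U` a 2×2 unitary) is control-symmetric,
i.e. `E₀ ⊗ₖ I₂ + E₁ ⊗ₖ U = I₂ ⊗ₖ E₀ + U ⊗ₖ E₁`, if and only if `U` is a phase gate
`diag(1, exp(iφ))` for some real `φ`. -/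
theorem controlled_gate_control_symmetric_iff_phase
    (U : Matrix (Fin 2) (Fin 2) ℂ)
    (hU : U * Uᴴ = 1 ∧ Uᴴ * U = 1) :
    ((!![1, 0; 0, 0] : Matrix (Fin 2) (Fin 2) ℂ) ⊗ₖ (1 : Matrix (Fin 2) (Fin 2) ℂ)
        + (!![0, 0; 0, 1] : Matrix (Fin 2) (Fin 2) ℂ) ⊗ₖ U
      = (1 : Matrix (Fin 2) (Fin 2) ℂ) ⊗ₖ (!![1, 0; 0, 0] : Matrix (Fin 2) (Fin 2) ℂ)
        + U ⊗ₖ (!![0, 0; 0, 1] : Matrix (Fin 2) (Fin 2) ℂ))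
    ↔ ∃ φ : ℝ, U = !![1, 0; 0, Complex.exp (φ * Complex.I)] := by
  constructor
  · intro h
    have h00 := congrFun (congrFun h ((0 : Fin 2), (1 : Fin 2))) ((0 : Fin 2), (1 : Fin 2))
    have h01 := congrFun (congrFun h ((0 : Fin 2), (1 : Fin 2))) ((1 : Fin 2), (1 : Fin 2))
    have h10 := congrFun (congrFun h ((1 : Fin 2), (1 : Fin 2))) ((0 : Fin 2), (1 : Fin 2))
    simp [Matrix.kroneckerMap_apply, Matrix.add_apply, Matrix.one_apply] at h00 h01 h10
    -- h00 : U 0 0 = 1, h01 : U 0 1 = 0, h10 : U 1 0 = 0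
    have hu := congrFun (congrFun hU.2 (1 : Fin 2)) (1 : Fin 2)
    simp [Matrix.mul_apply, Fin.sum_univ_two, Matrix.conjTranspose_apply,
      Matrix.one_apply, ← h01] at hu
    -- hu : conj (U 1 1) * U 1 1 = 1
    have hns : (Complex.normSq (U 1 1) : ℂ) = 1 := by
      rw [Complex.normSq_eq_conj_mul_self]; exact hu
    have habs : ‖U 1 1‖ = 1 := by
      have h2 : (‖U 1 1‖) ^ 2 = 1 := by
        rw [Complex.sq_norm]; exact_mod_cast hns
      nlinarith [norm_nonneg (U 1 1)]
    refine ⟨(U 1 1).arg, ?_⟩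
    have hval : U 1 1 = Complex.exp ((U 1 1).arg * Complex.I) := by
      have := Complex.norm_mul_exp_arg_mul_I (U 1 1)
      rw [habs] at this
      simpa using this.symm
    ext i j
    fin_cases i <;> fin_cases j <;>
      simp [← h00, ← h01, ← h10, ← hval]
  · rintro ⟨φ, rfl⟩
    ext ⟨i, k⟩ ⟨j, l⟩
    fin_cases i <;> fin_cases j <;> fin_cases k <;> fin_cases l <;>
      simp [Matrix.kroneckerMap_apply, Matrix.add_apply, Matrix.one_apply]
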